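/- Let (Ω, μ) be a measure space and u ∈ L¹(μ) real-valued. For v ∈ L¹(μ), the directional derivative at u in direction v of the functional j(u) = ∫ |u| dμ exists and equals ∫_{u>0} v dμ − ∫_{u<0} v dμ + ∫_{u=0} |v| dμ; that is, lim_{t→0⁺} (j(u + t v) − j(u))/t = ∫_{u>0} v − ∫_{u<0} v + ∫_{u=0} |v|. -/

import Mathlib

open MeasureTheory Filter Set


open MeasureTheory Filter

/-- Directional derivative of the `L¹`-norm functional `j(w) = ∫ |w|` at `u` in
direction `v`:
`lim_{t→0⁺} (j(u+tv) - j(u))/t = ∫_{u>0} v - ∫_{u<0} v + ∫_{u=0} |v|`. -/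
theorem stmt_5 {Ω : Type*} [MeasurableSpace Ω] (μ : Measure Ω) (u v : Ω → ℝ)
    (hum : Measurable u) (hu : Integrable u μ) (hv : Integrable v μ) :
    Tendsto (fun t : ℝ => ((∫ x, |u x + t * v x| ∂μ) - ∫ x, |u x| ∂μ) / t)
      (nhdsWithin 0 (Set.Ioi 0))
      (nhds ((∫ x in {x | 0 < u x}, v x ∂μ) - (∫ x in {x | u x < 0}, v x ∂μ)
        + ∫ x in {x | u x = 0}, |v x| ∂μ)) := by

  have hA : MeasurableSet {x | 0 < u x} := measurableSet_lt measurable_const hum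
  have hB : MeasurableSet {x | u x < 0} := measurableSet_lt hum measurable_const
  have hC : MeasurableSet {x | u x = 0} := hum (measurableSet_singleton 0)
  set g : Ω → ℝ := fun x => {x | 0 < u x}.indicator v x - {x | u x < 0}.indicator v x
      + {x | u x = 0}.indicator (fun x => |v x|) x with hg
  have hgi1 : Integrable ({x | 0 < u x}.indicator v) μ := hv.indicator hA
  have hgi2 : Integrable ({x | u x < 0}.indicator v) μ := hv.indicator hB
  have hgi3 : Integrable ({x | u x = 0}.indicator (fun x => |v x|)) μ := hv.abs.indicator hC
  have hgi12 : Integrable (fun x => {x | 0 < u x}.indicator v x - {x | u x < 0}.indicator v x) μ :=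
    hgi1.sub hgi2
  have hint : ∫ x, g x ∂μ
      = (∫ x in {x | 0 < u x}, v x ∂μ) - (∫ x in {x | u x < 0}, v x ∂μ)
        + ∫ x in {x | u x = 0}, |v x| ∂μ := by
    rw [hg]
    rw [integral_add hgi12 hgi3, integral_sub hgi1 hgi2,
      integral_indicator hA, integral_indicator hB, integral_indicator hC]
  rw [← hint]
  have key : Tendsto (fun t : ℝ => ∫ x, (|u x + t * v x| - |u x|) / t ∂μ)
      (nhdsWithin 0 (Set.Ioi 0)) (nhds (∫ x, g x ∂μ)) := by
    apply tendsto_integral_filter_of_dominated_convergence (fun x => |v x|)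
    · filter_upwards [self_mem_nhdsWithin] with t ht
      have m1 : AEMeasurable (fun x => |u x + t * v x|) μ :=
        measurable_abs.comp_aemeasurable (hu.1.aemeasurable.add (hv.1.aemeasurable.const_mul t))
      have m2 : AEMeasurable (fun x => |u x|) μ :=
        measurable_abs.comp_aemeasurable hu.1.aemeasurable
      exact ((m1.sub m2).div_const t).aestronglyMeasurable
    · filter_upwards [self_mem_nhdsWithin] with t ht
      refine ae_of_all _ fun x => ?_
      have ht' : (0:ℝ) < t := ht
      rw [Real.norm_eq_abs, abs_div, abs_of_pos ht', div_le_iff₀ ht']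
      calc |(|u x + t * v x| - |u x|)| ≤ |u x + t * v x - u x| := abs_abs_sub_abs_le_abs_sub _ _
        _ = t * |v x| := by rw [add_sub_cancel_left, abs_mul, abs_of_pos ht']
        _ = |v x| * t := mul_comm _ _
    · exact hv.abs
    · refine ae_of_all _ fun x => ?_
      rcases lt_trichotomy (u x) 0 with h | h | h
      · have hgx : g x = -v x := by
          simp [hg, Set.indicator_apply, h, not_lt.mpr h.le, h.ne]
        rw [hgx]
        apply Tendsto.congr' _ tendsto_const_nhds
        have hm : Set.Ioo (0:ℝ) (-u x / (|v x| + 1)) ∈ nhdsWithin 0 (Set.Ioi 0) :=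
          Ioo_mem_nhdsGT_of_mem ⟨le_refl _, div_pos (by linarith) (by positivity)⟩
        filter_upwards [hm] with t ht
        obtain ⟨ht0, ht1⟩ := ht
        have hlt : t * (|v x| + 1) < -u x := (lt_div_iff₀ (by positivity)).mp ht1
        have hneg : u x + t * v x < 0 := by nlinarith [le_abs_self (v x), abs_nonneg (v x)]
        rw [abs_of_neg hneg, abs_of_neg h]
        field_simp
        ring
      · have hgx : g x = |v x| := by
          simp [hg, Set.indicator_apply, h]
        rw [hgx]
        apply Tendsto.congr' _ tendsto_const_nhds
        filter_upwards [self_mem_nhdsWithin] with t ht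
        have ht' : (0:ℝ) < t := ht
        rw [h, zero_add, abs_zero, sub_zero, abs_mul, abs_of_pos ht']
        field_simp
      · have hgx : g x = v x := by
          simp [hg, Set.indicator_apply, h, not_lt.mpr h.le, h.ne']
        rw [hgx]
        apply Tendsto.congr' _ tendsto_const_nhds
        have hm : Set.Ioo (0:ℝ) (u x / (|v x| + 1)) ∈ nhdsWithin 0 (Set.Ioi 0) :=
          Ioo_mem_nhdsGT_of_mem ⟨le_refl _, by positivity⟩
        filter_upwards [hm] with t ht
        obtain ⟨ht0, ht1⟩ := ht
        have hlt : t * (|v x| + 1) < u x := (lt_div_iff₀ (by positivity)).mp ht1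
        have hpos : 0 < u x + t * v x := by nlinarith [neg_abs_le (v x), abs_nonneg (v x)]
        rw [abs_of_pos hpos, abs_of_pos h]
        field_simp
        ring
  apply Tendsto.congr' _ key
  filter_upwards [self_mem_nhdsWithin] with t ht
  have h1 : Integrable (fun x => |u x + t * v x|) μ := (hu.add (hv.const_mul t)).abs
  rw [integral_div, integral_sub h1 hu.abs]
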